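/- Let G be a Tanner graph that has a nonempty stopping set, with s_min the minimum size of a nonempty stopping set of G, and let t ≥ 1 be an integer. If p ∈ Z_{≥0}^n is a nonzero bad pseudocodeword satisfying the fundamental cone inequalities of G with p_i ≤ t for all i, then w_maxfrac(p) ≥ s_min / t; consequently w_BSC(p) ≥ s_min/t and w_AWGN(p) ≥ s_min/t. -/

import Mathlib

/-- A Tanner graph with `n` variable nodes and `m` check nodes, given by the
neighborhood `N u` (the set of variable nodes adjacent to check node `u`). -/
structure TannerGraph (n m : ℕ) where
  N : Fin m → Finset (Fin n)

/-- A codeword of the binary code `C(G)`: every check node has an even number of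
neighbors assigned 1. -/
def IsCodeword {n m : ℕ} (G : TannerGraph n m) (c : Fin n → ZMod 2) : Prop :=
  ∀ j : Fin m, ∑ i ∈ G.N j, c i = 0

/-- A vector `p` is a bad pseudocodeword if some weight vector makes its cost
negative while all codewords (as 0/1 real vectors) have nonnegative cost. -/
def IsBad {n m : ℕ} (G : TannerGraph n m) (p : Fin n → ℝ) : Prop :=
  ∃ w : Fin n → ℝ, (∑ i, p i * w i) < 0 ∧
    ∀ c : Fin n → ZMod 2, IsCodeword G c → 0 ≤ ∑ i, ((c i).val : ℝ) * w i

/-- A stopping set: every check node adjacent to some node of `S` is adjacent to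
at least two nodes of `S`. -/
def IsStoppingSet {n m : ℕ} (G : TannerGraph n m) (S : Finset (Fin n)) : Prop :=
  ∀ j : Fin m, (G.N j ∩ S).Nonempty → 2 ≤ (G.N j ∩ S).card

/-- AWGN pseudocodeword weight. -/
noncomputable def wAWGN {n : ℕ} (p : Fin n → ℝ) : ℝ :=
  (∑ i, p i) ^ 2 / (∑ i, (p i) ^ 2)

/-- The sum of the `e` largest components of `p` (for nonnegative `p`). -/
noncomputable def maxSum {n : ℕ} (p : Fin n → ℝ) (e : ℕ) : ℝ :=
  sSup ((fun S : Finset (Fin n) => ∑ i ∈ S, p i) '' {S | S.card = e})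

/-- The smallest number `e` such that the sum of the `e` largest components of `p`
is at least half of the total sum. -/
noncomputable def eBSC {n : ℕ} (p : Fin n → ℝ) : ℕ :=
  sInf {e : ℕ | (∑ i, p i) / 2 ≤ maxSum p e}

/-- BSC pseudocodeword weight. -/
noncomputable def wBSC {n : ℕ} (p : Fin n → ℝ) : ℝ :=
  if maxSum p (eBSC p) = (∑ i, p i) / 2 then 2 * (eBSC p : ℝ) else 2 * (eBSC p : ℝ) - 1

/-- Max-fractional weight: total sum divided by the largest component. -/
noncomputable def wMaxFrac {n : ℕ} (p : Fin n → ℝ) : ℝ :=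
  (∑ i, p i) / sSup (Set.range p)

theorem bad_pscw_weight_ge_smin_div_t {n m : ℕ} (G : TannerGraph n m) (smin t : ℕ)
    (hsmin : IsLeast {k : ℕ | ∃ S : Finset (Fin n),
      S.Nonempty ∧ IsStoppingSet G S ∧ S.card = k} smin)
    (ht : 1 ≤ t)
    (p : Fin n → ℕ) (hpne : p ≠ 0) (hpt : ∀ i, p i ≤ t)
    (hcone : ∀ j : Fin m, ∀ i ∈ G.N j,
      ((p i : ℝ)) ≤ ∑ k ∈ (G.N j).erase i, (p k : ℝ))
    (hbad : IsBad G (fun i => (p i : ℝ))) :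
    (smin : ℝ) / (t : ℝ) ≤ wMaxFrac (fun i => (p i : ℝ)) ∧
    (smin : ℝ) / (t : ℝ) ≤ wBSC (fun i => (p i : ℝ)) ∧
    (smin : ℝ) / (t : ℝ) ≤ wAWGN (fun i => (p i : ℝ)) := by
  classical
  set P : Fin n → ℝ := fun i => (p i : ℝ) with hPdef
  -- the support of p
  set S₀ : Finset (Fin n) := Finset.univ.filter (fun i => p i ≠ 0) with hS₀def
  have hS₀ne : S₀.Nonempty := by
    obtain ⟨i, hi⟩ := Function.ne_iff.mp hpne
    have hi' : p i ≠ 0 := by simpa using hi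
    exact ⟨i, by simp [hS₀def, hi']⟩
  -- the support is a stopping set
  have hstop : IsStoppingSet G S₀ := by
    intro j hj
    obtain ⟨i, hi⟩ := hj
    rw [Finset.mem_inter] at hi
    have hiN := hi.1
    have hip : p i ≠ 0 := by
      have := hi.2; simp only [hS₀def, Finset.mem_filter] at this; exact this.2
    have h1 : (1 : ℝ) ≤ (p i : ℝ) := by exact_mod_cast Nat.one_le_iff_ne_zero.mpr hip
    have hsum := hcone j i hiN
    have hex : ∃ k ∈ (G.N j).erase i, p k ≠ 0 := by
      by_contra h
      push_neg at h
      have hz : ∑ k ∈ (G.N j).erase i, (p k : ℝ) = 0 := by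
        apply Finset.sum_eq_zero
        intro k hk
        simp [h k hk]
      rw [hz] at hsum
      linarith
    obtain ⟨k, hk, hkp⟩ := hex
    have hkne : k ≠ i := Finset.ne_of_mem_erase hk
    have hkN : k ∈ G.N j := Finset.mem_of_mem_erase hk
    refine Finset.one_lt_card.mpr ⟨i, ?_, k, ?_, fun h => hkne h.symm⟩
    · exact Finset.mem_inter.mpr ⟨hiN, hi.2⟩
    · exact Finset.mem_inter.mpr ⟨hkN, by simp [hS₀def, hkp]⟩
  have hsmin_le : smin ≤ S₀.card := hsmin.2 ⟨S₀, hS₀ne, hstop, rfl⟩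
  have hcard_le : S₀.card ≤ ∑ i, p i := by
    calc S₀.card = ∑ _i ∈ S₀, 1 := by simp
    _ ≤ ∑ i ∈ S₀, p i := Finset.sum_le_sum (fun i hi => by
        have : p i ≠ 0 := by
          simp only [hS₀def, Finset.mem_filter] at hi; exact hi.2
        omega)
    _ ≤ ∑ i, p i := Finset.sum_le_sum_of_subset (Finset.subset_univ _)
  have hsmin_Sp : smin ≤ ∑ i, p i := le_trans hsmin_le hcard_le
  have hSp_pos : 0 < ∑ i, p i := lt_of_lt_of_le (Finset.card_pos.mpr hS₀ne) hcard_le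
  have hPsum : ∑ i, P i = ((∑ i, p i : ℕ) : ℝ) := by push_cast [hPdef]; rfl
  have hSpr_pos : (0:ℝ) < ((∑ i, p i : ℕ) : ℝ) := by exact_mod_cast hSp_pos
  have htr : (1:ℝ) ≤ (t:ℝ) := by exact_mod_cast ht
  have htpos : (0:ℝ) < (t:ℝ) := by linarith
  have hsminr : ((smin:ℝ)) ≤ ((∑ i, p i : ℕ) : ℝ) := by exact_mod_cast hsmin_Sp
  have hsmin0 : (0:ℝ) ≤ (smin:ℝ) := by positivity
  -- max-fractional weight
  have hmaxfrac : (smin : ℝ) / (t : ℝ) ≤ wMaxFrac P := by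
    unfold wMaxFrac
    rw [hPsum]
    obtain ⟨i0, hi0⟩ := hS₀ne
    have hi0p : p i0 ≠ 0 := by
      simp only [hS₀def, Finset.mem_filter] at hi0; exact hi0.2
    have hbdd : BddAbove (Set.range P) := (Set.finite_range P).bddAbove
    have hMge : (1:ℝ) ≤ sSup (Set.range P) := by
      refine le_trans ?_ (le_csSup hbdd ⟨i0, rfl⟩)
      simp only [hPdef]
      exact_mod_cast Nat.one_le_iff_ne_zero.mpr hi0p
    have hMle : sSup (Set.range P) ≤ (t:ℝ) := by
      have hrne : (Set.range P).Nonempty := ⟨P i0, i0, rfl⟩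
      apply csSup_le hrne
      rintro x ⟨i, rfl⟩
      simp only [hPdef]
      exact_mod_cast hpt i
    rw [div_le_div_iff₀ htpos (by linarith)]
    nlinarith
  -- AWGN weight
  have hawgn : (smin : ℝ) / (t : ℝ) ≤ wAWGN P := by
    unfold wAWGN
    have hQ : ∑ i, (P i)^2 = ((∑ i, (p i)^2 : ℕ) : ℝ) := by push_cast [hPdef]; rfl
    have hQle : (∑ i, (p i)^2 : ℕ) ≤ t * ∑ i, p i := by
      rw [Finset.mul_sum]
      apply Finset.sum_le_sum
      intro i _
      have := hpt i
      nlinarith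
    have hQpos : 0 < (∑ i, (p i)^2 : ℕ) := by
      obtain ⟨i0, hi0⟩ := hS₀ne
      have hi0p : p i0 ≠ 0 := by
        simp only [hS₀def, Finset.mem_filter] at hi0; exact hi0.2
      have : 0 < (p i0)^2 := by positivity
      exact lt_of_lt_of_le this (Finset.single_le_sum (f := fun i => (p i)^2)
        (fun i _ => Nat.zero_le _) (Finset.mem_univ i0))
    have hQler : ((∑ i, (p i)^2 : ℕ) : ℝ) ≤ (t:ℝ) * ((∑ i, p i : ℕ) : ℝ) := by
      exact_mod_cast hQle
    have hQposr : (0:ℝ) < ((∑ i, (p i)^2 : ℕ) : ℝ) := by exact_mod_cast hQpos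
    rw [hPsum, hQ, div_le_div_iff₀ htpos hQposr]
    nlinarith
  -- BSC weight
  have hbsc : (smin : ℝ) / (t : ℝ) ≤ wBSC P := by
    have hnE : (∑ i, P i) / 2 ≤ maxSum P n := by
      have hmem : (∑ i, P i) ∈ ((fun S : Finset (Fin n) => ∑ i ∈ S, P i) ''
          {S | S.card = n}) := ⟨Finset.univ, by simp, rfl⟩
      have hfin : ((fun S : Finset (Fin n) => ∑ i ∈ S, P i) ''
          {S : Finset (Fin n) | S.card = n}).Finite := Set.Finite.image _ (Set.toFinite _)
      have := le_csSup hfin.bddAbove hmem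
      unfold maxSum
      have h2 : (∑ i, P i) / 2 ≤ ∑ i, P i := by rw [hPsum]; linarith
      linarith
    set e := eBSC P with hedef
    have he_mem : (∑ i, P i) / 2 ≤ maxSum P e := Nat.sInf_mem (s := {e : ℕ | (∑ i, P i) / 2 ≤ maxSum P e}) ⟨n, hnE⟩
    have he_le_n : e ≤ n := Nat.sInf_le hnE
    have he_pos : 1 ≤ e := by
      by_contra h
      have he0 : e = 0 := by omega
      have hms0 : maxSum P 0 = 0 := by
        unfold maxSum
        have : {S : Finset (Fin n) | S.card = 0} = {∅} := by
          ext S; simp [Finset.card_eq_zero]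
        rw [this, Set.image_singleton]
        simp
      rw [he0, hms0, hPsum] at he_mem
      linarith
    obtain ⟨T, hTsub, hTcard⟩ := Finset.exists_subset_card_eq (s := (Finset.univ : Finset (Fin n))) (n := e)
      (by simpa using he_le_n)
    have hne_img : ((fun S : Finset (Fin n) => ∑ i ∈ S, P i) ''
        {S : Finset (Fin n) | S.card = e}).Nonempty := ⟨∑ i ∈ T, P i, T, hTcard, rfl⟩
    have hfin_img : ((fun S : Finset (Fin n) => ∑ i ∈ S, P i) ''
        {S : Finset (Fin n) | S.card = e}).Finite := Set.Finite.image _ (Set.toFinite _)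
    have hmax_eq : maxSum P e = sSup ((fun S : Finset (Fin n) => ∑ i ∈ S, P i) ''
        {S : Finset (Fin n) | S.card = e}) := rfl
    have hmaxle : maxSum P e ≤ (e : ℝ) * (t : ℝ) := by
      rw [hmax_eq]
      apply csSup_le hne_img
      rintro x ⟨S, hS, rfl⟩
      calc ∑ i ∈ S, P i ≤ ∑ _i ∈ S, (t:ℝ) := Finset.sum_le_sum (fun i _ => by
            simp only [hPdef]; exact_mod_cast hpt i)
      _ = (S.card : ℝ) * (t:ℝ) := by simp [mul_comm]
      _ = (e : ℝ) * (t : ℝ) := by rw [hS]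
    unfold wBSC
    rw [← hedef]
    by_cases h1 : maxSum P e = (∑ i, P i) / 2
    · rw [if_pos h1]
      rw [h1, hPsum] at hmaxle
      rw [div_le_iff₀ htpos]
      nlinarith
    · rw [if_neg h1]
      have hgt : (∑ i, P i) / 2 < maxSum P e := lt_of_le_of_ne he_mem (Ne.symm h1)
      -- the sup is attained
      have hmem : maxSum P e ∈ ((fun S : Finset (Fin n) => ∑ i ∈ S, P i) ''
          {S : Finset (Fin n) | S.card = e}) := by
        rw [hmax_eq]; exact Set.Nonempty.csSup_mem hne_img hfin_img
      obtain ⟨S, hScard, hSsum⟩ := hmem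
      have hSsum' : ((∑ i ∈ S, p i : ℕ) : ℝ) = maxSum P e := by
        rw [← hSsum]; push_cast [hPdef]; rfl
      set q := ∑ i ∈ S, p i with hqdef
      -- q > Sp / 2, i.e. Sp + 1 ≤ 2q
      have hSp_lt : (∑ i, p i) < 2 * q := by
        have h := hgt
        rw [← hSsum', hPsum] at h
        have : ((∑ i, p i : ℕ) : ℝ) < 2 * (q : ℝ) := by linarith
        exact_mod_cast this
      have hq_le : q ≤ e * t := by
        have : ((q:ℕ):ℝ) ≤ (e:ℝ) * (t:ℝ) := by rw [hSsum']; exact hmaxle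
        exact_mod_cast this
      -- sum outside S
      have hsplit : q + ∑ i ∈ Finset.univ \ S, p i = ∑ i, p i := by
        rw [hqdef, add_comm]
        exact Finset.sum_sdiff (Finset.subset_univ S)
      have hcout : (S₀ \ S).card ≤ ∑ i ∈ Finset.univ \ S, p i := by
        calc (S₀ \ S).card = ∑ _i ∈ S₀ \ S, 1 := by simp
        _ ≤ ∑ i ∈ S₀ \ S, p i := Finset.sum_le_sum (fun i hi => by
            have : p i ≠ 0 := by
              have := (Finset.mem_sdiff.mp hi).1
              simp only [hS₀def, Finset.mem_filter] at this; exact this.2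
            omega)
        _ ≤ ∑ i ∈ Finset.univ \ S, p i := Finset.sum_le_sum_of_subset
            (Finset.sdiff_subset_sdiff (Finset.subset_univ _) (le_refl _))
      have hcard_split : S₀.card ≤ e + (S₀ \ S).card := by
        have h := Finset.card_inter_add_card_sdiff S₀ S
        have : (S₀ ∩ S).card ≤ e := by
          rw [← hScard]
          exact Finset.card_le_card (Finset.inter_subset_right)
        omega
      -- nat arithmetic: smin + t ≤ 2*e*t
      have key : smin + t ≤ 2 * (e * t) := by
        have h1' : smin ≤ e + (S₀ \ S).card := le_trans hsmin_le hcard_split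
        have h2' : (S₀ \ S).card + q ≤ ∑ i, p i := by omega
        have h3' : e + t ≤ e * t + 1 := by
          obtain ⟨a, ha⟩ := Nat.exists_eq_add_of_le he_pos
          obtain ⟨b, hb⟩ := Nat.exists_eq_add_of_le ht
          rw [ha, hb]
          nlinarith [Nat.zero_le (a * b)]
        omega
      rw [div_le_iff₀ htpos]
      have hkey : ((smin:ℝ)) + (t:ℝ) ≤ 2 * ((e:ℝ) * (t:ℝ)) := by exact_mod_cast key
      linarith
  exact ⟨hmaxfrac, hbsc, hawgn⟩
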